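/- arXiv:1712.03578 — 2 statements merged into one kernel-verified Lean document; each statement's English description precedes it below -/
import Mathlib

section
/- Given A, Ā, B with B of full column rank, the stationary Lyapunov equation (A − BB'Π)Σ + Σ(A − BB'Π)' + BB' = 0 has a symmetric solution Π if and only if AΣ + ΣA' lies in the range of the map f_B : X ↦ BX' + XB' from ℝ^{n×m} to symmetric n×n matrices. -/
open Matrix

lemma aux_tr_zero {k l : ℕ} (A : Matrix (Fin k) (Fin l) ℝ) (h : (Aᵀ * A).trace ≤ 0) :
    A = 0 := by
  have ht : (Aᵀ * A).trace = ∑ j, ∑ i, (A i j)^2 := by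
    simp [Matrix.trace, Matrix.diag, Matrix.mul_apply, sq]
  rw [ht] at h
  have h0 : ∑ j, ∑ i, (A i j)^2 = 0 := le_antisymm h (by positivity)
  ext i j
  have := (Finset.sum_eq_zero_iff_of_nonneg (fun j _ => by positivity)).mp h0 j (Finset.mem_univ j)
  have := (Finset.sum_eq_zero_iff_of_nonneg (fun i _ => by positivity)).mp this i (Finset.mem_univ i)
  simpa using pow_eq_zero_iff (n := 2) (by norm_num) |>.mp this

lemma aux_tr_nonneg {k l : ℕ} (A : Matrix (Fin k) (Fin l) ℝ) : 0 ≤ (Aᵀ * A).trace := by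
  have ht : (Aᵀ * A).trace = ∑ j, ∑ i, (A i j)^2 := by
    simp [Matrix.trace, Matrix.diag, Matrix.mul_apply, sq]
  rw [ht]; positivity

open scoped MatrixOrder in
lemma aux_sylvester {m : ℕ} {G : Matrix (Fin m) (Fin m) ℝ} (hG : G.PosDef) (hGt : Gᵀ = G)
    (C : Matrix (Fin m) (Fin m) ℝ) : ∃ T, G * T + T * G = C := by
  let φ : Matrix (Fin m) (Fin m) ℝ →ₗ[ℝ] Matrix (Fin m) (Fin m) ℝ :=
    LinearMap.mulLeft ℝ G + LinearMap.mulRight ℝ G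
  have hφ : ∀ T, φ T = G * T + T * G := fun T => rfl
  have hinj : Function.Injective φ := by
    refine (injective_iff_map_eq_zero φ).mpr fun T hT => ?_
    rw [hφ] at hT
    have hH : (CFC.sqrt G).PosSemidef := (nonneg_iff_posSemidef).mp (CFC.sqrt_nonneg G)
    set H := CFC.sqrt G with hHdef
    have hH2 : H * H = G := CFC.sqrt_mul_sqrt_self G ((nonneg_iff_posSemidef).mpr hG.posSemidef)
    have hHsym : Hᵀ = H := by
      rw [← Matrix.conjTranspose_eq_transpose_of_trivial]; exact hH.isHermitian
    have hTtG : Tᵀ * G = -(G * Tᵀ) := by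
      have h1 : G * T = -(T * G) := by linear_combination (norm := noncomm_ring) hT
      have := congrArg Matrix.transpose h1
      simpa [Matrix.transpose_mul, hGt] using this
    have key : ((H*T*H)ᵀ * (H*T*H)).trace = -(((T*G)ᵀ * (T*G)).trace) := by
      have e1 : (H*T*H)ᵀ * (H*T*H) = H * (Tᵀ * G * T) * H := by
        rw [Matrix.transpose_mul, Matrix.transpose_mul, hHsym, ← hH2]; noncomm_ring
      have e2 : (T*G)ᵀ * (T*G) = G * (Tᵀ * T) * G := by
        rw [Matrix.transpose_mul, hGt]; noncomm_ring
      rw [e1, e2, Matrix.trace_mul_cycle, hH2, hTtG]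
      have e5 : G * (-(G * Tᵀ) * T) = -(G * (G * (Tᵀ * T))) := by noncomm_ring
      rw [e5, Matrix.trace_neg, neg_inj, Matrix.trace_mul_comm]
    have h2 : ((T*G)ᵀ * (T*G)).trace ≤ 0 := by
      have h1 := aux_tr_nonneg (H*T*H)
      rw [key] at h1; linarith
    have h3 : T * G = 0 := aux_tr_zero _ h2
    have hdet : IsUnit G.det := isUnit_iff_ne_zero.mpr (ne_of_gt hG.det_pos)
    calc T = T * (G * G⁻¹) := by rw [Matrix.mul_nonsing_inv _ hdet, Matrix.mul_one]
    _ = (T * G) * G⁻¹ := by rw [Matrix.mul_assoc]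
    _ = 0 := by rw [h3, Matrix.zero_mul]
  obtain ⟨T, hT⟩ := (LinearMap.injective_iff_surjective).mp hinj C
  exact ⟨T, (hφ T) ▸ hT⟩

lemma aux_posdef {n m : ℕ} {M : Matrix (Fin n) (Fin n) ℝ} (hM : M.PosDef)
    (B : Matrix (Fin n) (Fin m) ℝ) (hB : ∀ x, B *ᵥ x = 0 → x = 0) :
    (Bᵀ * M * B).PosDef := by
  rw [show Bᵀ = Bᴴ from (Matrix.conjTranspose_eq_transpose_of_trivial B).symm]
  refine Matrix.PosDef.of_dotProduct_mulVec_pos ?_ ?_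
  · exact Matrix.isHermitian_conjTranspose_mul_mul B hM.1
  · intro x hx
    have hBx : B *ᵥ x ≠ 0 := fun h => hx (hB x h)
    simpa only [star_mulVec, dotProduct_mulVec, vecMul_vecMul] using hM.dotProduct_mulVec_pos hBx

/-- For `Σ` symmetric positive definite and `B` of full column rank, the
stationary Lyapunov equation `(A − BBᵀΠ)Σ + Σ(A − BBᵀΠ)ᵀ + BBᵀ = 0` has a symmetric
solution `Π` if and only if `AΣ + ΣAᵀ` lies in the range of the map
`f_B : X ↦ BXᵀ + XBᵀ`. -/
theorem stmt_12 {n m : ℕ} (A : Matrix (Fin n) (Fin n) ℝ) (B : Matrix (Fin n) (Fin m) ℝ)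
    (S : Matrix (Fin n) (Fin n) ℝ) (hS : S.PosDef) (hSsym : Sᵀ = S)
    (hB : B.rank = m) :
    (∃ P : Matrix (Fin n) (Fin n) ℝ, Pᵀ = P ∧
      (A - B * Bᵀ * P) * S + S * (A - B * Bᵀ * P)ᵀ + B * Bᵀ = 0)
    ↔ (∃ X : Matrix (Fin n) (Fin m) ℝ, A * S + S * Aᵀ = B * Xᵀ + X * Bᵀ) := by
  have hdetS : IsUnit S.det := isUnit_iff_ne_zero.mpr (ne_of_gt hS.det_pos)
  constructor
  · rintro ⟨P, hPsym, hP⟩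
    refine ⟨S * P * B - (1/2 : ℝ) • B, ?_⟩
    have h := hP
    simp only [Matrix.sub_mul, Matrix.mul_sub, Matrix.transpose_sub, Matrix.transpose_mul,
      Matrix.transpose_transpose, hPsym, hSsym, Matrix.mul_assoc] at h
    simp only [Matrix.transpose_sub, Matrix.transpose_mul, Matrix.transpose_smul, hPsym, hSsym,
      Matrix.mul_sub, Matrix.sub_mul, Matrix.mul_smul, Matrix.smul_mul, Matrix.mul_assoc]
    linear_combination (norm := module) h
  · rintro ⟨X, hX⟩
    obtain ⟨Si, hSieq⟩ : ∃ Si, Si = S⁻¹ := ⟨_, rfl⟩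
    have hSSi : S * Si = 1 := by rw [hSieq]; exact Matrix.mul_nonsing_inv S hdetS
    have hSipd : Si.PosDef := by rw [hSieq]; exact hS.inv
    have hSit : Siᵀ = Si := by rw [hSieq, Matrix.transpose_nonsing_inv, hSsym]
    have hBinj : ∀ x, B *ᵥ x = 0 → x = 0 := by
      intro x hx
      have h1 := B.mulVecLin.finrank_range_add_finrank_ker
      rw [show Module.finrank ℝ (LinearMap.range B.mulVecLin) = m from hB] at h1
      rw [Module.finrank_fintype_fun_eq_card, Fintype.card_fin] at h1
      have h2 : Module.finrank ℝ (LinearMap.ker B.mulVecLin) = 0 := by omega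
      have h3 : LinearMap.ker B.mulVecLin = ⊥ := Submodule.finrank_eq_zero.mp h2
      exact (LinearMap.ker_eq_bot.mp h3) (by simpa using hx)
    obtain ⟨G, hGeq⟩ : ∃ G, G = Bᵀ * Si * B := ⟨_, rfl⟩
    have hGpd : G.PosDef := by rw [hGeq]; exact aux_posdef hSipd B hBinj
    have hGdet : IsUnit G.det := isUnit_iff_ne_zero.mpr (ne_of_gt hGpd.det_pos)
    have hGt : Gᵀ = G := by
      simp only [hGeq, Matrix.transpose_mul, Matrix.transpose_transpose, hSit, Matrix.mul_assoc]
    obtain ⟨Y, hYeq⟩ : ∃ Y, Y = X + (1/2:ℝ) • B := ⟨_, rfl⟩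
    obtain ⟨N, hNeq⟩ : ∃ N, N = Bᵀ * (Si * Y) := ⟨_, rfl⟩
    obtain ⟨T₀, hT₀⟩ := aux_sylvester hGpd hGt (Nᵀ - N)
    obtain ⟨T, hTeq⟩ : ∃ T, T = (1/2:ℝ) • (T₀ - T₀ᵀ) := ⟨_, rfl⟩
    have hTskew : Tᵀ = -T := by
      rw [hTeq, Matrix.transpose_smul, Matrix.transpose_sub, Matrix.transpose_transpose,
        ← smul_neg, neg_sub]
    have hT : G * T + T * G = Nᵀ - N := by
      have h3 := congrArg Matrix.transpose hT₀
      simp only [Matrix.transpose_add, Matrix.transpose_sub, Matrix.transpose_mul,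
        Matrix.transpose_transpose, hGt] at h3
      rw [hTeq]
      simp only [Matrix.mul_smul, Matrix.smul_mul, Matrix.mul_sub, Matrix.sub_mul]
      linear_combination (norm := module) (1/2:ℝ) • hT₀ - (1/2:ℝ) • h3
    obtain ⟨Y', hY'eq⟩ : ∃ Y', Y' = Y + B * T := ⟨_, rfl⟩
    obtain ⟨W, hWeq⟩ : ∃ W, W = Si * Y' := ⟨_, rfl⟩
    obtain ⟨L, hLeq⟩ : ∃ L, L = G⁻¹ * (Bᵀ * Si) := ⟨_, rfl⟩
    have hLB : L * B = 1 := by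
      rw [hLeq, Matrix.mul_assoc, ← hGeq, Matrix.nonsing_inv_mul G hGdet]
    obtain ⟨M, hMeq⟩ : ∃ M, M = Bᵀ * W := ⟨_, rfl⟩
    have hBW : M = N + G * T := by
      rw [hMeq, hWeq, hY'eq, hNeq, hGeq]
      simp only [Matrix.mul_add, Matrix.mul_assoc]
    have hMsym : Mᵀ = M := by
      rw [hBW, Matrix.transpose_add, Matrix.transpose_mul, hGt, hTskew]
      simp only [Matrix.neg_mul]
      linear_combination (norm := module) -hT
    have hMW : Wᵀ * B = M := by
      rw [← hMsym, hMeq, Matrix.transpose_mul, Matrix.transpose_transpose]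
    obtain ⟨P, hPeq⟩ : ∃ P, P = W * L + Lᵀ * Wᵀ - Lᵀ * (M * L) := ⟨_, rfl⟩
    have hPsym : Pᵀ = P := by
      rw [hPeq]
      simp only [Matrix.transpose_sub, Matrix.transpose_add, Matrix.transpose_mul,
        Matrix.transpose_transpose, hMsym, Matrix.mul_assoc]
      abel
    have hPB : P * B = W := by
      rw [hPeq]
      simp only [Matrix.sub_mul, Matrix.add_mul, Matrix.mul_assoc, hLB, Matrix.mul_one, hMW]
      abel
    have f0 : S * P * B = Y' := by
      rw [Matrix.mul_assoc, hPB, hWeq, ← Matrix.mul_assoc, hSSi, Matrix.one_mul]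
    have f1 : Bᵀ * (P * S) = Y'ᵀ := by
      have h := congrArg Matrix.transpose f0
      simp only [Matrix.transpose_mul, hPsym, hSsym, Matrix.mul_assoc] at h
      exact h
    have f1' : B * (Bᵀ * (P * S)) = B * Y'ᵀ := by rw [f1]
    have f2' : S * (P * (B * Bᵀ)) = Y' * Bᵀ := by
      have h := congrArg (· * Bᵀ) f0
      simp only [Matrix.mul_assoc] at h
      exact h
    have f3 : B * Y'ᵀ + Y' * Bᵀ = A * S + S * Aᵀ + B * Bᵀ := by
      rw [hY'eq, hYeq]
      simp only [Matrix.transpose_add, Matrix.transpose_smul, Matrix.transpose_mul, hTskew,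
        Matrix.mul_add, Matrix.add_mul, Matrix.mul_smul, Matrix.smul_mul, Matrix.mul_neg,
        Matrix.neg_mul, Matrix.mul_assoc]
      linear_combination (norm := module) -hX
    refine ⟨P, hPsym, ?_⟩
    simp only [Matrix.transpose_sub, Matrix.transpose_mul, Matrix.transpose_transpose, hPsym,
      Matrix.sub_mul, Matrix.mul_sub, Matrix.mul_assoc]
    linear_combination (norm := module) -f3 - f1' - f2'
end

section
/- Let λ(x) = −(1/2)x'Πx + n'x with Π symmetric. If Π satisfies (A−BB'Π)Σ + Σ(A−BB'Π)' + BB' = 0 and (A+Ā−BB'Π)m + BB'n = 0, then the Gaussian density ρ* = N(m,Σ) is a stationary solution of the Fokker–Planck equation ∇·((Ax + Ā m + BB'∇λ)ρ*) − (1/2)tr(BB'∇²ρ*) = 0. -/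
open Matrix

noncomputable section

/-- A Euclidean vector viewed as a plain vector (for matrix-vector algebra). -/
def toV {n : ℕ} (v : EuclideanSpace ℝ (Fin n)) : Fin n → ℝ := fun i => v i

/-- The Hessian matrix (in the space variable) of `f : ℝⁿ → ℝ`. -/
def hess {n : ℕ} (f : EuclideanSpace ℝ (Fin n) → ℝ) (x : EuclideanSpace ℝ (Fin n)) :
    Matrix (Fin n) (Fin n) ℝ :=
  Matrix.of fun i j => (fderiv ℝ (gradient f) x (EuclideanSpace.single j 1)) i

/-- Divergence `∇·F` of a vector field `F : ℝⁿ → ℝⁿ`. -/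
def dive {n : ℕ} (F : EuclideanSpace ℝ (Fin n) → Fin n → ℝ)
    (x : EuclideanSpace ℝ (Fin n)) : ℝ :=
  ∑ i, fderiv ℝ (fun y => F y i) x (EuclideanSpace.single i 1)

def toE {n : ℕ} (w : Fin n → ℝ) : EuclideanSpace ℝ (Fin n) := WithLp.toLp 2 w

variable {n : ℕ}

def lw (w : Fin n → ℝ) : EuclideanSpace ℝ (Fin n) →L[ℝ] ℝ :=
  ∑ j, w j • (EuclideanSpace.proj j : EuclideanSpace ℝ (Fin n) →L[ℝ] ℝ)

lemma lw_apply (w : Fin n → ℝ) (v : EuclideanSpace ℝ (Fin n)) :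
    lw w v = ∑ j, w j * v j := by
  simp [lw]

lemma lw_single (w : Fin n → ℝ) (j : Fin n) :
    lw w (EuclideanSpace.single j 1) = w j := by
  simp [lw_apply, EuclideanSpace.single_apply]

lemma grad_apply (f : EuclideanSpace ℝ (Fin n) → ℝ) (x : EuclideanSpace ℝ (Fin n)) (i : Fin n) :
    gradient f x i = fderiv ℝ f x (EuclideanSpace.single i 1) := by
  have h : fderiv ℝ f x (EuclideanSpace.single i 1)
      = @inner ℝ (EuclideanSpace ℝ (Fin n)) _ (gradient f x) (EuclideanSpace.single i 1) := by
    rw [gradient]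
    exact (InnerProductSpace.toDual_symm_apply).symm
  rw [h, EuclideanSpace.inner_single_right]
  simp

local notation "E" => EuclideanSpace ℝ (Fin n)

lemma hasFDerivAt_coord_sub (i : Fin n) (c : ℝ) (x : E) :
    HasFDerivAt (fun y : E => y i - c) (EuclideanSpace.proj i : E →L[ℝ] ℝ) x :=
  ((EuclideanSpace.proj i : E →L[ℝ] ℝ).hasFDerivAt (x := x)).sub_const c

lemma hasFDerivAt_quad (M : Matrix (Fin n) (Fin n) ℝ) (mv : Fin n → ℝ) (x : E) :
    HasFDerivAt (fun y : E => (toV y - mv) ⬝ᵥ M *ᵥ (toV y - mv))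
      (lw ((M + Mᵀ) *ᵥ (toV x - mv))) x := by
  have hfun : (fun y : E => (toV y - mv) ⬝ᵥ M *ᵥ (toV y - mv))
      = fun y : E => ∑ i, (y i - mv i) * ∑ j, M i j * (y j - mv j) := by
    funext y; simp [dotProduct, Matrix.mulVec, toV]
  rw [hfun]
  have h2 : ∀ i, HasFDerivAt (fun y : E => ∑ j, M i j * (y j - mv j))
      (∑ j, M i j • (EuclideanSpace.proj j : E →L[ℝ] ℝ)) x :=
    fun i => HasFDerivAt.fun_sum (fun j _ => (hasFDerivAt_coord_sub j (mv j) x).const_mul (M i j))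
  have h3 := HasFDerivAt.fun_sum (fun i (_ : i ∈ Finset.univ) =>
    ((hasFDerivAt_coord_sub i (mv i) x).mul (h2 i)))
  refine h3.congr_fderiv ?_
  ext v
  simp only [lw, ContinuousLinearMap.coe_sum', ContinuousLinearMap.coe_smul',
    Finset.sum_apply, Pi.smul_apply, PiLp.proj_apply, smul_eq_mul,
    ContinuousLinearMap.add_apply, Matrix.mulVec, dotProduct, Matrix.add_apply,
    Matrix.transpose_apply, Pi.sub_apply, toV, add_mul, Finset.sum_add_distrib]
  have key : ∀ (N : Matrix (Fin n) (Fin n) ℝ) (a b : Fin n → ℝ),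
      ∑ i, (∑ j, N j i * a j) * b i = ∑ i, a i * ∑ j, N i j * b j := by
    intro N a b
    simp_rw [Finset.sum_mul, Finset.mul_sum]
    rw [Finset.sum_comm]
    exact Finset.sum_congr rfl fun i _ => Finset.sum_congr rfl fun j _ => by ring
  rw [add_comm, key]

lemma rho_hasFDerivAt (c : ℝ) (M : Matrix (Fin n) (Fin n) ℝ) (mv : Fin n → ℝ)
    (hM : Mᵀ = M) (x : E) :
    HasFDerivAt (fun y : E => c * Real.exp (-(1/2) * ((toV y - mv) ⬝ᵥ M *ᵥ (toV y - mv))))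
      (lw ((c * Real.exp (-(1/2) * ((toV x - mv) ⬝ᵥ M *ᵥ (toV x - mv)))) •
        (-(M *ᵥ (toV x - mv))))) x := by
  have h := (((hasFDerivAt_quad M mv x).const_mul (-(1/2))).exp).const_mul c
  refine h.congr_fderiv ?_
  ext v
  rw [hM]
  simp only [lw_apply, Pi.smul_apply, smul_eq_mul, Pi.neg_apply, Matrix.add_mulVec,
    ContinuousLinearMap.coe_smul', Pi.add_apply, Finset.mul_sum]
  exact Finset.sum_congr rfl fun j _ => by ring

lemma hasFDerivAt_aff (N : Matrix (Fin n) (Fin n) ℝ) (mv : Fin n → ℝ) (i : Fin n) (x : E) :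
    HasFDerivAt (fun y : E => (N *ᵥ (toV y - mv)) i) (lw (N i)) x := by
  have hfun : (fun y : E => (N *ᵥ (toV y - mv)) i)
      = fun y : E => ∑ j, N i j * (y j - mv j) := by
    funext y; simp [Matrix.mulVec, dotProduct, toV]
  rw [hfun, lw]
  exact HasFDerivAt.fun_sum (fun j _ => (hasFDerivAt_coord_sub j (mv j) x).const_mul (N i j))

lemma prod_fderiv (c : ℝ) (M N : Matrix (Fin n) (Fin n) ℝ) (mv : Fin n → ℝ)
    (hM : Mᵀ = M) (x : E) (i j : Fin n) :
    fderiv ℝ (fun y : E => (c * Real.exp (-(1/2) * ((toV y - mv) ⬝ᵥ M *ᵥ (toV y - mv)))) *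
        (N *ᵥ (toV y - mv)) i) x (EuclideanSpace.single j 1)
      = (c * Real.exp (-(1/2) * ((toV x - mv) ⬝ᵥ M *ᵥ (toV x - mv)))) *
        ((-(M *ᵥ (toV x - mv))) j * (N *ᵥ (toV x - mv)) i + N i j) := by
  have h := (rho_hasFDerivAt c M mv hM x).fun_mul (hasFDerivAt_aff N mv i x)
  rw [h.fderiv]
  simp only [ContinuousLinearMap.add_apply, ContinuousLinearMap.coe_smul', Pi.smul_apply,
    smul_eq_mul, lw_single, Pi.smul_apply, Pi.neg_apply, smul_eq_mul]
  ring

lemma rho_fderiv_single (c : ℝ) (M : Matrix (Fin n) (Fin n) ℝ) (mv : Fin n → ℝ)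
    (hM : Mᵀ = M) (x : E) (j : Fin n) :
    fderiv ℝ (fun y : E => c * Real.exp (-(1/2) * ((toV y - mv) ⬝ᵥ M *ᵥ (toV y - mv)))) x
      (EuclideanSpace.single j 1)
      = (c * Real.exp (-(1/2) * ((toV x - mv) ⬝ᵥ M *ᵥ (toV x - mv)))) *
        (-(M *ᵥ (toV x - mv))) j := by
  rw [(rho_hasFDerivAt c M mv hM x).fderiv, lw_single]
  simp [mul_comm]

lemma grad_rho (c : ℝ) (M : Matrix (Fin n) (Fin n) ℝ) (mv : Fin n → ℝ) (hM : Mᵀ = M) :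
    gradient (fun y : E => c * Real.exp (-(1/2) * ((toV y - mv) ⬝ᵥ M *ᵥ (toV y - mv))))
      = fun x : E => toE (fun i => (c * Real.exp (-(1/2) * ((toV x - mv) ⬝ᵥ M *ᵥ (toV x - mv)))) *
          (((-M) *ᵥ (toV x - mv)) i)) := by
  funext x; ext i
  rw [grad_apply, rho_fderiv_single c M mv hM x i, Matrix.neg_mulVec]
  rfl

lemma hess_rho (c : ℝ) (M : Matrix (Fin n) (Fin n) ℝ) (mv : Fin n → ℝ) (hM : Mᵀ = M)
    (x : E) (i j : Fin n) :
    hess (fun y : E => c * Real.exp (-(1/2) * ((toV y - mv) ⬝ᵥ M *ᵥ (toV y - mv)))) x i j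
      = (c * Real.exp (-(1/2) * ((toV x - mv) ⬝ᵥ M *ᵥ (toV x - mv)))) *
        ((M *ᵥ (toV x - mv)) i * (M *ᵥ (toV x - mv)) j - M i j) := by
  have hcomp : ∀ i, HasFDerivAt
      (fun y : E => (c * Real.exp (-(1/2) * ((toV y - mv) ⬝ᵥ M *ᵥ (toV y - mv)))) *
        ((-M) *ᵥ (toV y - mv)) i)
      ((c * Real.exp (-(1/2) * ((toV x - mv) ⬝ᵥ M *ᵥ (toV x - mv)))) • lw ((-M) i) +
        (((-M) *ᵥ (toV x - mv)) i) •
          lw ((c * Real.exp (-(1/2) * ((toV x - mv) ⬝ᵥ M *ᵥ (toV x - mv)))) •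
            (-(M *ᵥ (toV x - mv))))) x :=
    fun i => (rho_hasFDerivAt c M mv hM x).mul (hasFDerivAt_aff (-M) mv i x)
  have hG0 := hasFDerivAt_pi.2 hcomp
  have hG : HasFDerivAt
      (fun x : E => toE (fun i => (c * Real.exp (-(1/2) * ((toV x - mv) ⬝ᵥ M *ᵥ (toV x - mv)))) *
          (((-M) *ᵥ (toV x - mv)) i)))
      ((PiLp.continuousLinearEquiv 2 ℝ (fun _ : Fin n => ℝ)).symm.toContinuousLinearMap.comp
        (ContinuousLinearMap.pi (fun i =>
          (c * Real.exp (-(1/2) * ((toV x - mv) ⬝ᵥ M *ᵥ (toV x - mv)))) • lw ((-M) i) +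
          (((-M) *ᵥ (toV x - mv)) i) •
            lw ((c * Real.exp (-(1/2) * ((toV x - mv) ⬝ᵥ M *ᵥ (toV x - mv)))) •
              (-(M *ᵥ (toV x - mv))))))) x :=
    ((PiLp.continuousLinearEquiv 2 ℝ
      (fun _ : Fin n => ℝ)).symm.toContinuousLinearMap.hasFDerivAt).comp x hG0
  show (fderiv ℝ (gradient _) x (EuclideanSpace.single j 1)) i = _
  rw [grad_rho c M mv hM, hG.fderiv]
  show ((c * Real.exp (-(1/2) * ((toV x - mv) ⬝ᵥ M *ᵥ (toV x - mv)))) • lw ((-M) i) +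
      (((-M) *ᵥ (toV x - mv)) i) •
        lw ((c * Real.exp (-(1/2) * ((toV x - mv) ⬝ᵥ M *ᵥ (toV x - mv)))) •
          (-(M *ᵥ (toV x - mv))))) (EuclideanSpace.single j 1) = _
  simp only [ContinuousLinearMap.add_apply, ContinuousLinearMap.coe_smul', Pi.smul_apply,
    smul_eq_mul, lw_single, Pi.neg_apply, Matrix.neg_mulVec, Matrix.neg_apply]
  ring


/-- Let `λ(x) = −½xᵀΠx + nᵀx` with `Π` symmetric (so `∇λ(x) = −Πx + n`).
If `Π` satisfies `(A−BBᵀΠ)Σ + Σ(A−BBᵀΠ)ᵀ + BBᵀ = 0` and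
`(A+Ā−BBᵀΠ)m + BBᵀn = 0`, then the Gaussian density `ρ* = N(m,Σ)` is a stationary
solution of the Fokker–Planck equation
`∇·((Ax + Ām + BBᵀ∇λ)ρ*) − ½ tr(BBᵀ∇²ρ*) = 0`. -/
theorem stmt_15 {n m : ℕ} (A Abar : Matrix (Fin n) (Fin n) ℝ)
    (B : Matrix (Fin n) (Fin m) ℝ)
    (P S : Matrix (Fin n) (Fin n) ℝ) (mv nv : Fin n → ℝ)
    (hPsym : Pᵀ = P) (hS : S.PosDef) (hSsym : Sᵀ = S)
    (hLyap : (A - B * Bᵀ * P) * S + S * (A - B * Bᵀ * P)ᵀ + B * Bᵀ = 0)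
    (hMean : (A + Abar - B * Bᵀ * P).mulVec mv + (B * Bᵀ).mulVec nv = 0)
    (ρ : EuclideanSpace ℝ (Fin n) → ℝ)
    (hρ : ∀ x, ρ x = (2 * Real.pi) ^ (-(n : ℝ) / 2) * S.det ^ (-(1 : ℝ) / 2) *
      Real.exp (-(1/2) * ((toV x - mv) ⬝ᵥ S⁻¹.mulVec (toV x - mv)))) :
    ∀ x, dive (fun y => ρ y •
        (A.mulVec (toV y) + Abar.mulVec mv
          + (B * Bᵀ).mulVec (-(P.mulVec (toV y)) + nv))) x
      - (1/2) * (B * Bᵀ * hess ρ x).trace = 0 := by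
  have hdet : IsUnit S.det := isUnit_iff_ne_zero.mpr hS.det_pos.ne'
  have hSM : S * S⁻¹ = 1 := Matrix.mul_nonsing_inv S hdet
  have hMS : S⁻¹ * S = 1 := Matrix.nonsing_inv_mul S hdet
  have hMsym : (S⁻¹)ᵀ = S⁻¹ := by rw [Matrix.transpose_nonsing_inv, hSsym]
  obtain ⟨M, hMdef⟩ : ∃ M, S⁻¹ = M := ⟨_, rfl⟩
  rw [hMdef] at hSM hMS hMsym hρ
  obtain ⟨Q, hQdef⟩ : ∃ Q, B * Bᵀ = Q := ⟨_, rfl⟩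
  rw [hQdef] at hLyap hMean ⊢
  obtain ⟨K, hKdef⟩ : ∃ K, A - Q * P = K := ⟨_, rfl⟩
  rw [hKdef] at hLyap
  obtain ⟨c, hcdef⟩ : ∃ c : ℝ, (2 * Real.pi) ^ (-(n : ℝ) / 2) * S.det ^ (-(1 : ℝ) / 2) = c :=
    ⟨_, rfl⟩
  rw [hcdef] at hρ
  have hρfun : ρ = fun y : EuclideanSpace ℝ (Fin n) =>
      c * Real.exp (-(1/2) * ((toV y - mv) ⬝ᵥ M *ᵥ (toV y - mv))) := funext hρ
  intro x
  set u : Fin n → ℝ := toV x - mv with hu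
  set ρx : ℝ := c * Real.exp (-(1/2) * (u ⬝ᵥ M *ᵥ u)) with hρx
  have hvec : ∀ y : EuclideanSpace ℝ (Fin n),
      A *ᵥ toV y + Abar *ᵥ mv + Q *ᵥ (-(P *ᵥ toV y) + nv) = K *ᵥ (toV y - mv) := by
    intro y
    have hm := hMean
    simp only [Matrix.add_mulVec, Matrix.sub_mulVec] at hm
    simp only [← hKdef, Matrix.mulVec_sub, Matrix.sub_mulVec, Matrix.mulVec_add,
      Matrix.mulVec_neg, Matrix.mulVec_mulVec]
    linear_combination hm
  have hdive : dive (fun y => ρ y •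
        (A.mulVec (toV y) + Abar.mulVec mv
          + Q.mulVec (-(P.mulVec (toV y)) + nv))) x
      = ρx * (-((M *ᵥ u) ⬝ᵥ (K *ᵥ u)) + K.trace) := by
    have hcomp : ∀ i : Fin n, (fun y : EuclideanSpace ℝ (Fin n) =>
        (ρ y • (A.mulVec (toV y) + Abar.mulVec mv + Q.mulVec (-(P.mulVec (toV y)) + nv))) i)
        = fun y : EuclideanSpace ℝ (Fin n) =>
          (c * Real.exp (-(1/2) * ((toV y - mv) ⬝ᵥ M *ᵥ (toV y - mv)))) *
            (K *ᵥ (toV y - mv)) i := by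
      intro i; funext y
      rw [Pi.smul_apply, hvec y, hρ y, smul_eq_mul]
    rw [dive]
    calc ∑ i, fderiv ℝ (fun y => (ρ y • (A.mulVec (toV y) + Abar.mulVec mv
            + Q.mulVec (-(P.mulVec (toV y)) + nv))) i) x (EuclideanSpace.single i 1)
        = ∑ i, ρx * ((-(M *ᵥ u)) i * (K *ᵥ u) i + K i i) :=
          Finset.sum_congr rfl fun i _ => by rw [hcomp i, prod_fderiv c M K mv hMsym x i i]
      _ = ρx * (-((M *ᵥ u) ⬝ᵥ (K *ᵥ u)) + K.trace) := by
          have h1 : ∑ i, (-(M *ᵥ u)) i * (K *ᵥ u) i = -((M *ᵥ u) ⬝ᵥ (K *ᵥ u)) := by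
            simp [dotProduct, Finset.sum_neg_distrib]
          have h2 : ∑ i, K i i = K.trace := rfl
          rw [← Finset.mul_sum, Finset.sum_add_distrib, h1, h2]
  have hH : ∀ k i : Fin n, hess ρ x k i = ρx * ((M *ᵥ u) k * (M *ᵥ u) i - M k i) := by
    intro k i; rw [hρfun]; exact hess_rho c M mv hMsym x k i
  have hhess : (Q * hess ρ x).trace
      = ρx * ((M *ᵥ u) ⬝ᵥ Q *ᵥ (M *ᵥ u)) - ρx * (Q * M).trace := by
    have ht : (Q * hess ρ x).trace = ∑ i, ∑ k, Q i k * hess ρ x k i := by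
      simp [Matrix.trace, Matrix.diag, Matrix.mul_apply]
    have ht2 : (Q * M).trace = ∑ i, ∑ k, Q i k * M k i := by
      simp [Matrix.trace, Matrix.diag, Matrix.mul_apply]
    have hd : (M *ᵥ u) ⬝ᵥ Q *ᵥ (M *ᵥ u) = ∑ i, ∑ k, (M *ᵥ u) i * (Q i k * (M *ᵥ u) k) := by
      simp [dotProduct, Matrix.mulVec, Finset.mul_sum]
    rw [ht, ht2, hd, Finset.mul_sum, Finset.mul_sum, ← Finset.sum_sub_distrib]
    refine Finset.sum_congr rfl fun i _ => ?_
    rw [Finset.mul_sum, Finset.mul_sum, ← Finset.sum_sub_distrib]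
    refine Finset.sum_congr rfl fun k _ => ?_
    rw [hH k i]; ring
  have e1 : M * K + Kᵀ * M + M * Q * M = 0 := by
    have h0 : M * (K * S + S * Kᵀ + Q) * M = 0 := by rw [hLyap]; simp
    have hexp : M * (K * S + S * Kᵀ + Q) * M
        = M * K * (S * M) + M * S * (Kᵀ * M) + M * Q * M := by noncomm_ring
    rw [hexp, hSM, hMS, mul_one, one_mul] at h0
    exact h0
  have e1u : u ⬝ᵥ ((M * K) *ᵥ u) + u ⬝ᵥ ((Kᵀ * M) *ᵥ u) + u ⬝ᵥ ((M * Q * M) *ᵥ u) = 0 := by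
    have h := congrArg (fun N : Matrix (Fin n) (Fin n) ℝ => u ⬝ᵥ N *ᵥ u) e1
    simpa [Matrix.add_mulVec, dotProduct_add] using h
  have q3 : u ⬝ᵥ ((Kᵀ * M) *ᵥ u) = u ⬝ᵥ ((M * K) *ᵥ u) := by
    rw [Matrix.dotProduct_mulVec, ← Matrix.mulVec_transpose, dotProduct_comm,
      Matrix.transpose_mul, Matrix.transpose_transpose, hMsym]
  have q1 : (M *ᵥ u) ⬝ᵥ (K *ᵥ u) = u ⬝ᵥ ((M * K) *ᵥ u) := by
    rw [← Matrix.mulVec_mulVec, Matrix.dotProduct_mulVec u M, ← Matrix.mulVec_transpose, hMsym]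
  have q2 : (M *ᵥ u) ⬝ᵥ Q *ᵥ (M *ᵥ u) = u ⬝ᵥ ((M * Q * M) *ᵥ u) := by
    rw [← Matrix.mulVec_mulVec, ← Matrix.mulVec_mulVec,
      Matrix.dotProduct_mulVec u M, ← Matrix.mulVec_transpose, hMsym]
  have e2 : (Q * M).trace = -(K.trace + K.trace) := by
    have hQeq : Q = -(K * S + S * Kᵀ) := eq_neg_of_add_eq_zero_right hLyap
    rw [hQeq, Matrix.neg_mul, Matrix.trace_neg, Matrix.add_mul,
      Matrix.mul_assoc K S M, hSM, Matrix.mul_one, Matrix.trace_add,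
      Matrix.trace_mul_cycle S Kᵀ M, hMS, Matrix.one_mul, Matrix.trace_transpose]
  have e3 : u ⬝ᵥ ((M * Q * M) *ᵥ u) = -(2 * (u ⬝ᵥ ((M * K) *ᵥ u))) := by
    rw [q3] at e1u; linarith
  rw [hdive, hhess, q1, q2, e2, e3]
  ring
end
end
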